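/- Let ℍ denote the real quaternions and p ∈ ℝ[x] a monic irreducible polynomial. Suppose p has a root λ₁ ∈ ℍ that does not lie in the image of ℝ in ℍ. Then the image of p in ℍ[x] decomposes as (x − λ₂)·(x − λ₁), where λ₂ = aλ₁a⁻¹ for some nonzero a ∈ ℍ (so λ₂ is an inner conjugate of λ₁). -/

import Mathlib

open Polynomial

private lemma quat_conj_aux (lam : Quaternion ℝ) :
    ∃ a : Quaternion ℝ, a ≠ 0 ∧ a * lam = star lam * a := by
  by_cases hxy : lam.imI = 0 ∧ lam.imJ = 0
  · refine ⟨(show Quaternion ℝ from ⟨0, 1, 0, 0⟩), ?_, ?_⟩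
    · intro h
      simpa [Quaternion.imI_zero] using congrArg (fun q : Quaternion ℝ => q.imI) h
    · generalize hA : (show Quaternion ℝ from ⟨0, 1, 0, 0⟩) = A
      apply Quaternion.ext <;> simp only [Quaternion.re_mul, Quaternion.imI_mul, Quaternion.imJ_mul,
        Quaternion.imK_mul] <;> subst hA <;> simp [hxy.1, hxy.2]
  · refine ⟨(show Quaternion ℝ from ⟨0, lam.imJ, -lam.imI, 0⟩), ?_, ?_⟩
    · intro h
      rw [not_and_or] at hxy
      rcases hxy with h1 | h2
      · exact h1 (by simpa [Quaternion.imJ_zero] using congrArg (fun q : Quaternion ℝ => q.imJ) h)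
      · exact h2 (by simpa [Quaternion.imI_zero] using congrArg (fun q : Quaternion ℝ => q.imI) h)
    · generalize hA : (show Quaternion ℝ from ⟨0, lam.imJ, -lam.imI, 0⟩) = A
      apply Quaternion.ext <;> simp only [Quaternion.re_mul, Quaternion.imI_mul, Quaternion.imJ_mul,
        Quaternion.imK_mul] <;> subst hA <;> simp <;> ring

private lemma quat_linear_mul (a b : Quaternion ℝ) :
    (X - C b) * (X - C a) = X ^ 2 - C (b + a) * X + C (b * a) := by
  have h : (X : (Quaternion ℝ)[X]) * C a = C a * X := X_mul
  rw [sub_mul, mul_sub, mul_sub, h, C_add, C_mul, add_mul, sq]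
  noncomm_ring

/-- if a monic irreducible real polynomial `p` has a root
`λ₁ ∈ ℍ` not lying in the image of `ℝ`, then its image in `ℍ[x]` factors as
`(x - λ₂)·(x - λ₁)` where `λ₂ = a·λ₁·a⁻¹` is an inner conjugate of `λ₁`. -/
theorem monic_irreducible_real_factors_over_quaternions
    (p : ℝ[X]) (hmonic : p.Monic) (hirr : Irreducible p)
    (lam₁ : Quaternion ℝ)
    (hroot : (p.map (algebraMap ℝ (Quaternion ℝ))).eval lam₁ = 0)
    (hnotreal : lam₁ ∉ Set.range (algebraMap ℝ (Quaternion ℝ))) :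
    ∃ a : Quaternion ℝ, a ≠ 0 ∧
      p.map (algebraMap ℝ (Quaternion ℝ)) =
        (X - C (a * lam₁ * a⁻¹)) * (X - C lam₁) := by
  -- the real quadratic polynomial satisfied by `lam₁`
  set q : ℝ[X] := X ^ 2 - C (2 * lam₁.re) * X + C (Quaternion.normSq lam₁) with hq
  have haevq : aeval lam₁ q = 0 := by
    simp only [hq, map_add, map_sub, map_pow, map_mul, aeval_X, aeval_C,
      Quaternion.algebraMap_def]
    rw [← Quaternion.coe_mul, ← Quaternion.self_add_star', ← Quaternion.star_mul_self]
    noncomm_ring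
  have haevp : aeval lam₁ p = 0 := by rwa [aeval_def, ← eval_map]
  -- `p` is the minimal polynomial of `lam₁`, hence divides `q`
  have hpm : p = minpoly ℝ lam₁ := minpoly.eq_of_irreducible_of_monic hirr haevp hmonic
  have hdvd : p ∣ q := hpm ▸ minpoly.dvd ℝ lam₁ haevq
  have hqmonic : q.Monic := by
    have : q.natDegree = 2 ∧ q.coeff 2 = 1 := by
      constructor
      · rw [hq]; compute_degree!
      · rw [hq]; simp [coeff_X_pow]
    rw [Monic, leadingCoeff, this.1, this.2]
  have hqdeg : q.natDegree = 2 := by rw [hq]; compute_degree!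
  -- degrees
  obtain ⟨c, hc⟩ := hdvd
  have hp0 : p ≠ 0 := hmonic.ne_zero
  have hcmonic : c.Monic := hmonic.of_mul_monic_left (hc ▸ hqmonic)
  have hdegsum : p.natDegree + c.natDegree = 2 := by
    rw [← hqdeg, hc, natDegree_mul hp0 hcmonic.ne_zero]
  have hpdeg1 : p.natDegree ≠ 1 := by
    intro h1
    have hpe : p = X + C (p.coeff 0) := hmonic.eq_X_add_C h1
    apply hnotreal
    refine ⟨-(p.coeff 0), ?_⟩
    have := haevp
    rw [hpe] at this
    simp only [map_add, aeval_X, aeval_C] at this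
    have : lam₁ = -(algebraMap ℝ (Quaternion ℝ)) (p.coeff 0) := by
      linear_combination (norm := noncomm_ring) this
    rw [this, map_neg]
  have hpdegpos : 0 < p.natDegree := hirr.natDegree_pos
  have hpdeg2 : p.natDegree = 2 := by omega
  have hcdeg0 : c.natDegree = 0 := by omega
  have hc1 : c = 1 := hcmonic.natDegree_eq_zero.mp hcdeg0
  have hpq : p = q := by rw [hc, hc1, mul_one]
  -- get the conjugating element
  obtain ⟨a, ha0, hcomm⟩ := quat_conj_aux lam₁
  refine ⟨a, ha0, ?_⟩
  have hconj : a * lam₁ * a⁻¹ = star lam₁ := by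
    rw [hcomm, mul_assoc, mul_inv_cancel₀ ha0, mul_one]
  rw [hconj, quat_linear_mul, hpq, hq]
  simp only [Polynomial.map_add, Polynomial.map_sub, Polynomial.map_pow,
    Polynomial.map_mul, map_X, map_C]
  rw [Quaternion.algebraMap_def]
  rw [show ((2 * lam₁.re : ℝ) : Quaternion ℝ) = star lam₁ + lam₁ by
      rw [← Quaternion.star_add_self'],
    show ((Quaternion.normSq lam₁ : ℝ) : Quaternion ℝ) = star lam₁ * lam₁ by
      rw [← Quaternion.star_mul_self]]
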